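/- arXiv:2308.12359 — 2 statements merged into one kernel-verified Lean document; each statement's English description precedes it below -/
import Mathlib

section
/- Let R > 0 and define α_{k+1} = α_k (1 - (1/((k+1)(k+3))) · α_k² R²/(1 - α_k² R²)) with α_0 ∈ (0, 3/(4R)). Then α_k ∈ (0, 3/(4R)) for all k, the sequence (α_k) is nonincreasing, and it converges to a positive limit α_∞ > 0. -/
open Filter

private lemma exp_neg_two_le (t : ℝ) (ht0 : 0 ≤ t) (ht : t ≤ 1/2) :
    Real.exp (-(2*t)) ≤ 1 - t := by
  have h1 : (1:ℝ) + 2*t ≤ Real.exp (2*t) := by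
    have := Real.add_one_le_exp (2*t); linarith
  have hpos : (0:ℝ) < 1 + 2*t := by linarith
  have h2 : Real.exp (-(2*t)) ≤ 1/(1+2*t) := by
    rw [Real.exp_neg, one_div]
    exact inv_anti₀ hpos h1
  have h3 : 1/(1+2*t) ≤ 1 - t := by
    rw [div_le_iff₀ hpos]; nlinarith
  linarith

set_option maxHeartbeats 2000000 in
theorem eagv_stepsize_convergence (R : ℝ) (hR : 0 < R) (α : ℕ → ℝ)
    (hα0 : α 0 ∈ Set.Ioo 0 (3 / (4 * R)))
    (hrec : ∀ k : ℕ, α (k + 1) =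
      α k * (1 - (1 / (((k : ℝ) + 1) * ((k : ℝ) + 3))) *
        ((α k) ^ 2 * R ^ 2 / (1 - (α k) ^ 2 * R ^ 2)))) :
    (∀ k, α k ∈ Set.Ioo 0 (3 / (4 * R))) ∧ Antitone α ∧
      ∃ αinf : ℝ, 0 < αinf ∧ Tendsto α atTop (nhds αinf) := by
  obtain ⟨h0pos, h0lt⟩ := hα0
  -- key one-step lemma
  have hkey : ∀ k : ℕ, 0 < α k → α k < 3 / (4 * R) →
      0 < α (k+1) ∧ α (k+1) ≤ α k ∧
      α k * Real.exp (-(18/7) * (1/((k:ℝ)+1) - 1/((k:ℝ)+2))) ≤ α (k+1) := by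
    intro k hp hl
    have hx : α k * R < 3/4 := by
      have h4R : (0:ℝ) < 4 * R := by linarith
      have := (lt_div_iff₀ h4R).mp hl
      nlinarith
    set s := (α k)^2 * R^2 with hs
    have hs0 : 0 < s := by positivity
    have hs9 : s < 9/16 := by nlinarith [mul_pos hp hR]
    have h1s : 7/16 < 1 - s := by linarith
    have h1s0 : 0 < 1 - s := by linarith
    have hkn : (0:ℝ) ≤ (k:ℝ) := Nat.cast_nonneg k
    have hk1 : (1:ℝ) ≤ (k:ℝ) + 1 := by linarith
    have hk3 : (3:ℝ) ≤ (k:ℝ) + 3 := by linarith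
    have hk2 : (2:ℝ) ≤ (k:ℝ) + 2 := by linarith
    have hprod : (0:ℝ) < ((k:ℝ)+1) * ((k:ℝ)+3) := by positivity
    set c := 1 / (((k:ℝ)+1) * ((k:ℝ)+3)) with hc
    have hc0 : 0 < c := by positivity
    set t := c * (s / (1 - s)) with htdef
    have hratio : s / (1 - s) < 9/7 := by
      rw [div_lt_iff₀ h1s0]; nlinarith
    have hratio0 : 0 ≤ s / (1 - s) := by positivity
    have ht0 : 0 ≤ t := by positivity
    have hcle : c ≤ 1 / (((k:ℝ)+1) * ((k:ℝ)+2)) := by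
      apply one_div_le_one_div_of_le (by positivity)
      nlinarith
    have ht_le : t ≤ (9/7) * (1 / (((k:ℝ)+1) * ((k:ℝ)+2))) := by
      calc t ≤ c * (9/7) := by
              apply mul_le_mul_of_nonneg_left (le_of_lt hratio) (le_of_lt hc0)
        _ ≤ (1 / (((k:ℝ)+1) * ((k:ℝ)+2))) * (9/7) := by
              apply mul_le_mul_of_nonneg_right hcle (by norm_num)
        _ = (9/7) * (1 / (((k:ℝ)+1) * ((k:ℝ)+2))) := by ring
    have ht_half : t ≤ 1/2 := by
      have hc3 : c ≤ 1/3 := by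
        apply one_div_le_one_div_of_le (by norm_num)
        nlinarith
      calc t ≤ c * (9/7) := by
              apply mul_le_mul_of_nonneg_left (le_of_lt hratio) (le_of_lt hc0)
        _ ≤ (1/3) * (9/7) := by nlinarith
        _ ≤ 1/2 := by norm_num
    have hrec' : α (k+1) = α k * (1 - t) := by rw [hrec k]
    have ht1 : t < 1 := lt_of_le_of_lt ht_half (by norm_num)
    refine ⟨?_, ?_, ?_⟩
    · rw [hrec']; exact mul_pos hp (by linarith)
    · rw [hrec']; nlinarith
    · rw [hrec']
      have hE : -(18/7) * (1/((k:ℝ)+1) - 1/((k:ℝ)+2)) =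
          -(2 * ((9/7) * (1 / (((k:ℝ)+1) * ((k:ℝ)+2))))) := by
        field_simp; ring
      rw [hE]
      have hmono : Real.exp (-(2 * ((9/7) * (1 / (((k:ℝ)+1) * ((k:ℝ)+2)))))) ≤
          Real.exp (-(2 * t)) := by
        apply Real.exp_le_exp.mpr; linarith [ht_le]
      have h2 : Real.exp (-(2*t)) ≤ 1 - t := exp_neg_two_le t ht0 ht_half
      have h4 := le_trans hmono h2
      exact mul_le_mul_of_nonneg_left h4 hp.le
  -- membership
  have hmem : ∀ k, 0 < α k ∧ α k < 3 / (4 * R) := by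
    intro k
    induction k with
    | zero => exact ⟨h0pos, h0lt⟩
    | succ n ih =>
      obtain ⟨hp, hl⟩ := ih
      obtain ⟨h1, h2, _⟩ := hkey n hp hl
      exact ⟨h1, lt_of_le_of_lt h2 hl⟩
  have hanti : Antitone α := by
    apply antitone_nat_of_succ_le
    intro n
    exact (hkey n (hmem n).1 (hmem n).2).2.1
  -- lower bound by induction
  have hlow : ∀ n : ℕ, α 0 * Real.exp (-(18/7) * (1 - 1/((n:ℝ)+1))) ≤ α n := by
    intro n
    induction n with
    | zero =>
      have : ((0:ℕ):ℝ) + 1 = 1 := by norm_num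
      rw [this]
      norm_num
    | succ n ih =>
      obtain ⟨_, _, h3⟩ := hkey n (hmem n).1 (hmem n).2
      have hmul : α 0 * Real.exp (-(18/7) * (1 - 1/((n:ℝ)+1))) *
          Real.exp (-(18/7) * (1/((n:ℝ)+1) - 1/((n:ℝ)+2))) ≤
          α n * Real.exp (-(18/7) * (1/((n:ℝ)+1) - 1/((n:ℝ)+2))) := by
        apply mul_le_mul_of_nonneg_right ih (Real.exp_pos _).le
      have heq : α 0 * Real.exp (-(18/7) * (1 - 1/((n:ℝ)+1))) *
          Real.exp (-(18/7) * (1/((n:ℝ)+1) - 1/((n:ℝ)+2))) =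
          α 0 * Real.exp (-(18/7) * (1 - 1/((n:ℝ)+1+1))) := by
        rw [mul_assoc, ← Real.exp_add]
        ring_nf
      push_cast
      calc α 0 * Real.exp (-(18/7) * (1 - 1/((n:ℝ)+1+1)))
          = α 0 * Real.exp (-(18/7) * (1 - 1/((n:ℝ)+1))) *
            Real.exp (-(18/7) * (1/((n:ℝ)+1) - 1/((n:ℝ)+2))) := by
            exact heq.symm
        _ ≤ α n * Real.exp (-(18/7) * (1/((n:ℝ)+1) - 1/((n:ℝ)+2))) := hmul
        _ ≤ α (n+1) := h3
  set c := α 0 * Real.exp (-(18/7)) with hcdef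
  have hcpos : 0 < c := mul_pos h0pos (Real.exp_pos _)
  have hclow : ∀ n, c ≤ α n := by
    intro n
    refine le_trans ?_ (hlow n)
    apply mul_le_mul_of_nonneg_left _ h0pos.le
    apply Real.exp_le_exp.mpr
    have : (0:ℝ) ≤ 1/((n:ℝ)+1) := by positivity
    nlinarith
  refine ⟨fun k => (hmem k), hanti, ⟨⨅ n, α n, ?_, ?_⟩⟩
  · exact lt_of_lt_of_le hcpos (le_ciInf hclow)
  · exact tendsto_atTop_ciInf hanti ⟨c, fun x ⟨n, hn⟩ => hn ▸ hclow n⟩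
end

section
/- Let G : ℝ^d → ℝ^d be ρ-comonotone with ρ > -1/(2R), R-Lipschitz, G(z*) = 0, and suppose the FEG-with-moving-anchor Lyapunov sequence V_k = A_k‖G(z^k)‖² - B_k⟨G(z^k), z̄^k - z^k⟩ + c_k‖z* - z̄^k‖² with A_k = (k²/2)(1/R + 2ρ) - kρ, B_k = k, c_k ↓ c_∞ ≥ 1/(1/R + 2ρ), z̄^0 = z^0, is nonincreasing with V_0 = c_0‖z^0 - z*‖². Then ‖G(z^k)‖² ≤ 4c_0‖z^0 - z*‖²/(k²(1/R + 2ρ)) for all k ≥ 1. -/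
open Filter RealInnerProductSpace

theorem feg_moving_anchor_rate {d : ℕ}
    (G : EuclideanSpace ℝ (Fin d) → EuclideanSpace ℝ (Fin d))
    (R ρ : ℝ) (hR : 0 < R) (hρ : -1 / (2 * R) < ρ)
    (hcomono : ∀ z w, ρ * ‖G z - G w‖ ^ 2 ≤ ⟪G z - G w, z - w⟫)
    (hlip : ∀ z w, ‖G z - G w‖ ≤ R * ‖z - w‖)
    (zs : EuclideanSpace ℝ (Fin d)) (hzs : G zs = 0)
    (z zb : ℕ → EuclideanSpace ℝ (Fin d)) (hz0 : zb 0 = z 0)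
    (c : ℕ → ℝ) (cinf : ℝ)
    (hcanti : Antitone c) (hclim : Tendsto c atTop (nhds cinf))
    (hcinf : 1 / (1 / R + 2 * ρ) ≤ cinf)
    (V : ℕ → ℝ)
    (hV : ∀ k : ℕ, V k =
      ((k : ℝ) ^ 2 / 2 * (1 / R + 2 * ρ) - (k : ℝ) * ρ) * ‖G (z k)‖ ^ 2
        - (k : ℝ) * ⟪G (z k), zb k - z k⟫
        + c k * ‖zs - zb k‖ ^ 2)
    (hVanti : Antitone V)
    (hV0 : V 0 = c 0 * ‖z 0 - zs‖ ^ 2) :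
    ∀ k : ℕ, 1 ≤ k →
      ‖G (z k)‖ ^ 2 ≤ 4 * c 0 * ‖z 0 - zs‖ ^ 2 / ((k : ℝ) ^ 2 * (1 / R + 2 * ρ)) := by
  intro k hk
  have hs : 0 < 1 / R + 2 * ρ := by
    have hhalf : 2 * (1 / (2 * R)) = 1 / R := by field_simp
    have h2 : -(1 / (2 * R)) < ρ := by rw [← neg_div]; exact hρ
    linarith
  set s : ℝ := 1 / R + 2 * ρ with hs_def
  have hkR : (1 : ℝ) ≤ (k : ℝ) := by exact_mod_cast hk
  have hkpos : (0 : ℝ) < (k : ℝ) := by linarith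
  set g := G (z k) with hg
  set u := zb k - zs with hu
  have hck0 : 1 / s ≤ c k := le_trans hcinf (hcanti.le_of_tendsto hclim k)
  have hck : 1 ≤ c k * s := by rwa [div_le_iff₀ hs] at hck0
  have hmono : ρ * ‖g‖ ^ 2 ≤ ⟪g, z k - zs⟫ := by
    have := hcomono (z k) zs
    rwa [hzs, sub_zero] at this
  have hsplit : ⟪g, zb k - z k⟫ = ⟪g, u⟫ - ⟪g, z k - zs⟫ := by
    rw [← inner_sub_right]
    congr 1
    simp only [hu]
    abel
  have hcs : ⟪g, u⟫ ≤ ‖g‖ * ‖u‖ := real_inner_le_norm g u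
  have hnorm : ‖zs - zb k‖ = ‖u‖ := by rw [hu, norm_sub_rev]
  have hVk : (k : ℝ) ^ 2 / 4 * s * ‖g‖ ^ 2 ≤ V k := by
    rw [hV k, hnorm, hsplit, ← hg]
    have h2 : (k : ℝ) * (ρ * ‖g‖ ^ 2) ≤ (k : ℝ) * ⟪g, z k - zs⟫ :=
      mul_le_mul_of_nonneg_left hmono (le_of_lt hkpos)
    have h3 : (k : ℝ) * ⟪g, u⟫ ≤ (k : ℝ) * (‖g‖ * ‖u‖) :=
      mul_le_mul_of_nonneg_left hcs (le_of_lt hkpos)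
    have hsq : 0 ≤ (s * (k : ℝ) * ‖g‖ - 2 * ‖u‖) ^ 2 := sq_nonneg _
    have h4 : 0 ≤ 4 * ((c k * s - 1) * ‖u‖ ^ 2) := by
      have := mul_nonneg (show (0:ℝ) ≤ c k * s - 1 by linarith) (sq_nonneg ‖u‖)
      linarith
    have key : 0 ≤ (k : ℝ) ^ 2 / 4 * s * ‖g‖ ^ 2 - (k : ℝ) * (‖g‖ * ‖u‖) + c k * ‖u‖ ^ 2 := by
      have e : (k : ℝ) ^ 2 / 4 * s * ‖g‖ ^ 2 - (k : ℝ) * (‖g‖ * ‖u‖) + c k * ‖u‖ ^ 2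
          = ((s * (k : ℝ) * ‖g‖ - 2 * ‖u‖) ^ 2 + 4 * ((c k * s - 1) * ‖u‖ ^ 2)) / (4 * s) := by
        field_simp
        ring
      rw [e]
      exact div_nonneg (add_nonneg hsq h4) (by linarith)
    linarith [h2, h3, key]
  have hVle : V k ≤ V 0 := hVanti (Nat.zero_le k)
  rw [hV0] at hVle
  have hfinal : (k : ℝ) ^ 2 / 4 * s * ‖g‖ ^ 2 ≤ c 0 * ‖z 0 - zs‖ ^ 2 :=
    le_trans hVk hVle
  rw [le_div_iff₀ (by positivity)]
  calc ‖g‖ ^ 2 * ((k : ℝ) ^ 2 * s) = 4 * ((k : ℝ) ^ 2 / 4 * s * ‖g‖ ^ 2) := by ring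
    _ ≤ 4 * (c 0 * ‖z 0 - zs‖ ^ 2) := by linarith
    _ = 4 * c 0 * ‖z 0 - zs‖ ^ 2 := by ring
end
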